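/- If G^c is a connected vertex-coloured graph on n vertices with c colours and n > c ≥ 1, then γᵗ(G^c) ≤ (n + c − 1)/2. -/

import Mathlib

/-- `S` is a dominating set of `G`: every vertex is in `S` or has a neighbour in `S`. -/
def IsDomSet {V : Type*} (G : SimpleGraph V) (S : Finset V) : Prop :=
  ∀ v : V, v ∈ S ∨ ∃ u ∈ S, G.Adj u v

/-- `S` is tropical w.r.t. the colouring `col`: every colour appears on a vertex of `S`. -/
def IsTropical {V C : Type*} (col : V → C) (S : Finset V) : Prop :=
  ∀ ch : C, ∃ v ∈ S, col v = ch

/-- The tropical domination number: the least size of a tropical dominating set. -/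
noncomputable def tropDomNum {V C : Type*} (G : SimpleGraph V) (col : V → C) : ℕ :=
  sInf {k : ℕ | ∃ S : Finset V, IsDomSet G S ∧ IsTropical col S ∧ S.card = k}

open Finset

/-- From any dominating set, complete with representatives of missing colours. -/
lemma tropDomNum_le_dom {V C : Type*} [Fintype V] [Fintype C] [DecidableEq V] [DecidableEq C]
    (G : SimpleGraph V) (col : V → C) (hsurj : Function.Surjective col)
    (S : Finset V) (hS : IsDomSet G S) :
    tropDomNum G col ≤ S.card + (Fintype.card C - (S.image col).card) := by
  classical
  set M : Finset C := (univ : Finset C) \ S.image col with hM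
  set f : C → V := fun ch => (hsurj ch).choose with hf
  have hfc : ∀ ch, col (f ch) = ch := fun ch => (hsurj ch).choose_spec
  set R : Finset V := M.image f with hR
  have hdom : IsDomSet G (S ∪ R) := by
    intro v
    rcases hS v with hv | ⟨u, hu, hadj⟩
    · exact Or.inl (mem_union_left _ hv)
    · exact Or.inr ⟨u, mem_union_left _ hu, hadj⟩
  have htrop : IsTropical col (S ∪ R) := by
    intro ch
    by_cases h : ch ∈ S.image col
    · obtain ⟨v, hv, hcv⟩ := mem_image.mp h
      exact ⟨v, mem_union_left _ hv, hcv⟩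
    · have : ch ∈ M := by simp [hM, h]
      exact ⟨f ch, mem_union_right _ (mem_image_of_mem f this), hfc ch⟩
  have hle : (S ∪ R).card ≤ S.card + (Fintype.card C - (S.image col).card) := by
    have h1 : (S ∪ R).card ≤ S.card + R.card := card_union_le S R
    have h2 : R.card ≤ M.card := card_image_le
    have h3 : M.card = Fintype.card C - (S.image col).card := by
      rw [hM, card_sdiff_of_subset (subset_univ _), card_univ]
    omega
  calc tropDomNum G col ≤ (S ∪ R).card :=
        Nat.sInf_le ⟨S ∪ R, hdom, htrop, rfl⟩
    _ ≤ _ := hle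

/-- The exchange argument for the tight, colour-side-pure case:
`A` contains two vertices of the same colour. -/
lemma exchange_lemma {V C : Type*} [Fintype V] [Fintype C] [DecidableEq V] [DecidableEq C]
    (G : SimpleGraph V) (col : V → C) (A B : Finset V)
    (hcrossA : ∀ v ∈ A, ∃ w ∈ B, G.Adj w v)
    (hcrossB : ∀ v ∈ B, ∃ w ∈ A, G.Adj w v)
    (hunion : A ∪ B = univ)
    (hpure : Disjoint (A.image col) (B.image col))
    (htight : A.card + (B.image col).card = B.card + (A.image col).card)
    (hdup : ∃ u ∈ A, ∃ v ∈ A, u ≠ v ∧ col u = col v) :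
    ∃ S : Finset V, IsDomSet G S ∧
      S.card + (A.image col).card + (B.image col).card + 1 ≤
        A.card + (B.image col).card + (S.image col).card := by
  classical
  obtain ⟨u, hu, v, hv, huv, hcoluv⟩ := hdup
  set P : Finset V := B.filter (fun y => ∀ w, G.Adj w y → w ∉ A \ {v}) with hP
  have memAB : ∀ x : V, x ∈ A ∨ x ∈ B := by
    intro x
    have : x ∈ A ∪ B := by rw [hunion]; exact mem_univ x
    exact mem_union.mp this
  have adjP : ∀ y ∈ P, G.Adj v y := by
    intro y hy
    obtain ⟨hyB, hyprop⟩ := mem_filter.mp hy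
    obtain ⟨w, hwA, hadj⟩ := hcrossB y hyB
    have : w ∉ A \ {v} := hyprop w hadj
    have : w = v := by
      by_contra hne
      exact this (mem_sdiff.mpr ⟨hwA, by simp [hne]⟩)
    exact this ▸ hadj
  by_cases hbr : ∃ y ∈ P, ∃ z, z ≠ y ∧ col z = col y
  · -- branch i : remove a colour-redundant private vertex from B, add v
    obtain ⟨y, hyP, z, hzy, hzcol⟩ := hbr
    have hyB : y ∈ B := (mem_filter.mp hyP).1
    have hzB : z ∈ B := by
      rcases memAB z with hzA | hzB
      · exfalso
        have h1 : col z ∈ A.image col := mem_image_of_mem col hzA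
        have h2 : col z ∈ B.image col := hzcol ▸ mem_image_of_mem col hyB
        exact (Finset.disjoint_left.mp hpure h1) h2
      · exact hzB
    refine ⟨insert v (B.erase y), ?_, ?_⟩
    · intro x
      by_cases hxv : x = v
      · exact Or.inl (by rw [hxv]; exact mem_insert_self v _)
      by_cases hxy : x = y
      · exact Or.inr ⟨v, mem_insert_self v _, hxy ▸ adjP y hyP⟩
      rcases memAB x with hxA | hxB
      · obtain ⟨w, hwB, hadj⟩ := hcrossA x hxA
        have hwy : w ≠ y := by
          rintro rfl
          have := (mem_filter.mp hyP).2 x hadj.symm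
          exact this (mem_sdiff.mpr ⟨hxA, by simp [hxv]⟩)
        exact Or.inr ⟨w, mem_insert_of_mem (mem_erase.mpr ⟨hwy, hwB⟩), hadj⟩
      · exact Or.inl (mem_insert_of_mem (mem_erase.mpr ⟨hxy, hxB⟩))
    · -- cardinality bound
      set S := insert v (B.erase y) with hS
      have hcard : S.card ≤ B.card := by
        have h1 : S.card ≤ (B.erase y).card + 1 := card_insert_le _ _
        have h2 : (B.erase y).card = B.card - 1 := card_erase_of_mem hyB
        have h3 : 1 ≤ B.card := card_pos.mpr ⟨y, hyB⟩
        omega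
      have him : (B.image col).card + 1 ≤ (S.image col).card := by
        have hsub : insert (col v) (B.image col) ⊆ S.image col := by
          intro ch hch
          rcases mem_insert.mp hch with rfl | hch
          · exact mem_image_of_mem col (mem_insert_self v _)
          · obtain ⟨x, hxB, hxcol⟩ := mem_image.mp hch
            by_cases hxy : x = y
            · have hzS : z ∈ S := mem_insert_of_mem (mem_erase.mpr ⟨hzy, hzB⟩)
              exact mem_image.mpr ⟨z, hzS, by rw [hzcol, ← hxy]; exact hxcol⟩
            · exact mem_image.mpr ⟨x, mem_insert_of_mem (mem_erase.mpr ⟨hxy, hxB⟩), hxcol⟩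
        have hnot : col v ∉ B.image col :=
          Finset.disjoint_left.mp hpure (mem_image_of_mem col hv)
        have := card_le_card hsub
        rwa [card_insert_of_notMem hnot] at this
      omega
  · -- branch ii : all private vertices have globally unique colours
    push_neg at hbr
    have huniq : ∀ y ∈ P, ∀ z, col z = col y → z = y := by
      intro y hy z hcz
      by_contra hne
      exact hbr y hy z hne hcz
    obtain ⟨w₀, hw₀B, hw₀adj⟩ := hcrossA v hv
    set Q : Finset V := insert w₀ P with hQ
    have hQB : Q ⊆ B := by
      intro x hx
      rcases mem_insert.mp hx with rfl | hx
      · exact hw₀B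
      · exact (mem_filter.mp hx).1
    refine ⟨(A.erase v) ∪ Q, ?_, ?_⟩
    · intro x
      rcases memAB x with hxA | hxB
      · by_cases hxv : x = v
        · exact Or.inr ⟨w₀, mem_union_right _ (mem_insert_self w₀ P), hxv ▸ hw₀adj⟩
        · exact Or.inl (mem_union_left _ (mem_erase.mpr ⟨hxv, hxA⟩))
      · by_cases hxP : x ∈ P
        · exact Or.inl (mem_union_right _ (mem_insert_of_mem hxP))
        · have : ¬ (∀ w, G.Adj w x → w ∉ A \ {v}) := by
            intro hcon
            exact hxP (mem_filter.mpr ⟨hxB, hcon⟩)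
          push_neg at this
          obtain ⟨w, hadj, hwAv⟩ := this
          obtain ⟨hwA, hwv⟩ := mem_sdiff.mp hwAv
          have hwv' : w ≠ v := by simpa using hwv
          exact Or.inr ⟨w, mem_union_left _ (mem_erase.mpr ⟨hwv', hwA⟩), hadj⟩
    · set S := (A.erase v) ∪ Q with hS
      have hcard : S.card ≤ (A.card - 1) + Q.card := by
        have h1 : S.card ≤ (A.erase v).card + Q.card := card_union_le _ _
        have h2 : (A.erase v).card = A.card - 1 := card_erase_of_mem hv
        omega
      have hAcard : 1 ≤ A.card := card_pos.mpr ⟨v, hv⟩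
      have him : (A.image col).card + Q.card ≤ (S.image col).card := by
        have hsub : (A.image col) ∪ (Q.image col) ⊆ S.image col := by
          intro ch hch
          rcases mem_union.mp hch with hch | hch
          · obtain ⟨x, hxA, hxcol⟩ := mem_image.mp hch
            by_cases hxv : x = v
            · have huS : u ∈ S := mem_union_left _ (mem_erase.mpr ⟨huv, hu⟩)
              exact mem_image.mpr ⟨u, huS, by rw [hcoluv, ← hxv, hxcol]⟩
            · exact mem_image.mpr ⟨x, mem_union_left _ (mem_erase.mpr ⟨hxv, hxA⟩), hxcol⟩
          · obtain ⟨x, hxQ, hxcol⟩ := mem_image.mp hch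
            exact mem_image.mpr ⟨x, mem_union_right _ hxQ, hxcol⟩
        have hdisj2 : Disjoint (A.image col) (Q.image col) :=
          hpure.mono_right (image_subset_image hQB)
        have hinj : (Q.image col).card = Q.card := by
          apply card_image_of_injOn
          intro y1 hy1 y2 hy2 hcol12
          rcases mem_insert.mp hy1 with rfl | hy1P
          · rcases mem_insert.mp hy2 with rfl | hy2P
            · rfl
            · exact huniq y2 hy2P y1 hcol12
          · rcases mem_insert.mp hy2 with rfl | hy2P
            · exact (huniq y1 hy1P y2 hcol12.symm).symm
            · exact huniq y2 hy2P y1 hcol12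
        have := card_le_card hsub
        rw [card_union_of_disjoint hdisj2, hinj] at this
        omega
      omega

/-- Every vertex has a neighbour whose distance to `r` has opposite parity. -/
lemma exists_parity_neighbor {V : Type*} [Fintype V] (G : SimpleGraph V)
    (hconn : G.Connected) (hcard : 2 ≤ Fintype.card V) (r x : V) :
    ∃ w, G.Adj w x ∧ (Even (G.dist r w) ↔ ¬ Even (G.dist r x)) := by
  by_cases hx : x = r
  · subst hx
    obtain ⟨y, hy⟩ := Fintype.exists_ne_of_one_lt_card (by omega) x
    obtain ⟨p⟩ := hconn.preconnected x y
    have hp : ¬ p.Nil := SimpleGraph.Walk.not_nil_of_ne (Ne.symm hy)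
    rw [SimpleGraph.Walk.not_nil_iff] at hp
    obtain ⟨u, h, q, rfl⟩ := hp
    have hd1 : G.dist x u = 1 := by
      apply le_antisymm
      · have := SimpleGraph.dist_le h.toWalk
        simpa using this
      · exact hconn.pos_dist_of_ne h.ne
    refine ⟨u, h.symm, ?_⟩
    rw [hd1, SimpleGraph.dist_self]
    simp [Nat.even_iff]
  · have hd : 0 < G.dist r x := hconn.pos_dist_of_ne (Ne.symm hx)
    obtain ⟨p, hp⟩ := hconn.exists_walk_length_eq_dist r x
    have hq : ¬ p.reverse.Nil := SimpleGraph.Walk.not_nil_of_ne hx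
    rw [SimpleGraph.Walk.not_nil_iff] at hq
    obtain ⟨u, h, q, hrev⟩ := hq
    have hlen : q.length + 1 = G.dist r x := by
      have : p.reverse.length = G.dist r x := by rw [SimpleGraph.Walk.length_reverse, hp]
      rw [hrev] at this
      simpa using this
    have hle : G.dist r u ≤ G.dist r x - 1 := by
      have h1 : G.dist u r ≤ q.length := SimpleGraph.dist_le q
      rw [SimpleGraph.dist_comm]
      omega
    have hge : G.dist r x ≤ G.dist r u + 1 := by
      have h1 : G.dist r x ≤ G.dist r u + G.dist u x := hconn.dist_triangle
      have h2 : G.dist u x ≤ 1 := by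
        have := SimpleGraph.dist_le h.symm.toWalk
        simpa using this
      omega
    have hdu : G.dist r x = G.dist r u + 1 := by omega
    refine ⟨u, h.symm, ?_⟩
    rw [hdu, Nat.even_add_one]
    tauto

/-- if `G^c` is connected with `n > c ≥ 1`, then `γᵗ(G^c) ≤ (n + c - 1)/2`. -/
theorem tropDomNum_le_of_connected
    {V C : Type*} [Fintype V] [Fintype C] (G : SimpleGraph V) (hconn : G.Connected)
    (col : V → C) (hsurj : Function.Surjective col)
    (n c : ℕ) (hn : Fintype.card V = n) (hc : Fintype.card C = c)
    (hc1 : 1 ≤ c) (hcn : c < n) :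
    2 * tropDomNum G col ≤ n + c - 1 := by
  classical
  have hn2 : 2 ≤ Fintype.card V := by omega
  have hV : Nonempty V := Fintype.card_pos_iff.mp (by omega)
  obtain ⟨r⟩ := hV
  set A : Finset V := univ.filter (fun x => Even (G.dist r x)) with hA
  set B : Finset V := univ.filter (fun x => ¬ Even (G.dist r x)) with hB
  have hunion : A ∪ B = univ := filter_union_filter_not_eq _ univ
  have hsum : A.card + B.card = n := by
    rw [hA, hB, ← hn, ← Finset.card_univ]
    exact Finset.card_filter_add_card_filter_not _
  have hcrossA : ∀ v ∈ A, ∃ w ∈ B, G.Adj w v := by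
    intro v hvA
    obtain ⟨w, hadj, hiff⟩ := exists_parity_neighbor G hconn hn2 r v
    have hvE : Even (G.dist r v) := (mem_filter.mp hvA).2
    refine ⟨w, mem_filter.mpr ⟨mem_univ w, ?_⟩, hadj⟩
    intro hwE
    exact (hiff.mp hwE) hvE
  have hcrossB : ∀ v ∈ B, ∃ w ∈ A, G.Adj w v := by
    intro v hvB
    obtain ⟨w, hadj, hiff⟩ := exists_parity_neighbor G hconn hn2 r v
    have hvE : ¬ Even (G.dist r v) := (mem_filter.mp hvB).2
    exact ⟨w, mem_filter.mpr ⟨mem_univ w, hiff.mpr hvE⟩, hadj⟩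
  have memAB : ∀ x : V, x ∈ A ∨ x ∈ B := by
    intro x
    have : x ∈ A ∪ B := by rw [hunion]; exact mem_univ x
    exact mem_union.mp this
  -- both A and B are dominating
  have hdomA : IsDomSet G A := by
    intro x
    rcases memAB x with hxA | hxB
    · exact Or.inl hxA
    · obtain ⟨w, hwA, hadj⟩ := hcrossB x hxB
      exact Or.inr ⟨w, hwA, hadj⟩
  have hdomB : IsDomSet G B := by
    intro x
    rcases memAB x with hxA | hxB
    · obtain ⟨w, hwB, hadj⟩ := hcrossA x hxA
      exact Or.inr ⟨w, hwB, hadj⟩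
    · exact Or.inl hxB
  set α := (A.image col).card with halpha
  set β := (B.image col).card with hbeta
  have himsum : α + β = c + ((A.image col) ∩ (B.image col)).card := by
    have h1 : (A.image col) ∪ (B.image col) = univ := by
      rw [← image_union, hunion, Finset.image_univ_of_surjective hsurj]
    have h2 := card_union_add_card_inter (A.image col) (B.image col)
    rw [h1, card_univ, hc] at h2
    omega
  have halc : α ≤ c := by rw [← hc, ← card_univ]; exact card_le_card (subset_univ _)
  have hbec : β ≤ c := by rw [← hc, ← card_univ]; exact card_le_card (subset_univ _)
  have hA_im : α ≤ A.card := card_image_le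
  have hB_im : β ≤ B.card := card_image_le
  have tA : tropDomNum G col ≤ A.card + (c - α) := by
    have := tropDomNum_le_dom G col hsurj A hdomA
    rwa [hc] at this
  have tB : tropDomNum G col ≤ B.card + (c - β) := by
    have := tropDomNum_le_dom G col hsurj B hdomB
    rwa [hc] at this
  rcases Finset.eq_empty_or_nonempty ((A.image col) ∩ (B.image col)) with hov | hov
  · -- colour-side-pure case
    have hpure : Disjoint (A.image col) (B.image col) :=
      disjoint_iff_inter_eq_empty.mpr hov
    have hac : α + β = c := by rw [himsum, hov]; simp
    by_cases h1 : 2 * (A.card + (c - α)) ≤ n + c - 1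
    · omega
    by_cases h2 : 2 * (B.card + (c - β)) ≤ n + c - 1
    · omega
    -- tight case
    have htight : A.card + β = B.card + α := by omega
    have hdupside : α < A.card ∨ β < B.card := by omega
    rcases hdupside with hda | hdb
    · obtain ⟨uu, huu, vv, hvv, hne, heq⟩ :=
        exists_ne_map_eq_of_card_lt_of_maps_to hda (fun a ha => mem_image_of_mem col ha)
      obtain ⟨S, hSdom, hSineq⟩ := exchange_lemma G col A B hcrossA hcrossB hunion hpure
        htight ⟨uu, huu, vv, hvv, hne, heq⟩
      have hSim : (S.image col).card ≤ c := by
        rw [← hc, ← card_univ]; exact card_le_card (subset_univ _)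
      have := tropDomNum_le_dom G col hsurj S hSdom
      rw [hc] at this
      omega
    · obtain ⟨uu, huu, vv, hvv, hne, heq⟩ :=
        exists_ne_map_eq_of_card_lt_of_maps_to hdb (fun a ha => mem_image_of_mem col ha)
      obtain ⟨S, hSdom, hSineq⟩ := exchange_lemma G col B A hcrossB hcrossA
        (by rw [union_comm]; exact hunion) hpure.symm htight.symm
        ⟨uu, huu, vv, hvv, hne, heq⟩
      have hSim : (S.image col).card ≤ c := by
        rw [← hc, ← card_univ]; exact card_le_card (subset_univ _)
      have := tropDomNum_le_dom G col hsurj S hSdom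
      rw [hc] at this
      omega
  · -- some colour on both sides
    have hov1 : 1 ≤ ((A.image col) ∩ (B.image col)).card := card_pos.mpr hov
    omega
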